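/- Let 0 < p_1 < p_2 < ... < p_n and let r be a positive real number different from 1, 2, ..., n-1. Then the Loewner matrix L_r is nonsingular (its determinant is nonzero). -/

import Mathlib

open Matrix

/-- Generalized Descartes rule of signs (weak form): a real combination of `m` distinct
real-power functions vanishing at `m` distinct positive points has all coefficients zero. -/
lemma descartes_simple : ∀ (m : ℕ) (a lam x : ℕ → ℝ),
    (∀ i < m, ∀ j < m, lam i = lam j → i = j) →
    (∀ i < m, 0 < x i) →
    (∀ i, i + 1 < m → x i < x (i + 1)) →
    (∀ i < m, ∑ k ∈ Finset.range m, a k * x i ^ lam k = 0) →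
    ∀ k < m, a k = 0 := by
  intro m
  induction m with
  | zero => intro a lam x _ _ _ _ k hk; omega
  | succ m ih =>
    intro a lam x hinj hxpos hxmono hroot
    set g : ℝ → ℝ := fun t => ∑ k ∈ Finset.range (m + 1), a k * t ^ (lam k - lam 0) with hg
    set g' : ℝ → ℝ := fun t =>
      ∑ k ∈ Finset.range (m + 1), a k * ((lam k - lam 0) * t ^ (lam k - lam 0 - 1)) with hg'
    have hderiv : ∀ t : ℝ, 0 < t → HasDerivAt g (g' t) t := by
      intro t ht
      exact HasDerivAt.fun_sum fun k _ =>
        ((Real.hasDerivAt_rpow_const (p := lam k - lam 0) (Or.inl ht.ne'))).const_mul (a k)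
    have hgx : ∀ i < m + 1, g (x i) = 0 := by
      intro i hi
      have hxi := hxpos i hi
      have : g (x i) = (∑ k ∈ Finset.range (m + 1), a k * x i ^ lam k) / x i ^ lam 0 := by
        rw [Finset.sum_div]
        refine Finset.sum_congr rfl fun k _ => ?_
        rw [Real.rpow_sub hxi, mul_div_assoc]
      rw [this, hroot i hi, zero_div]
    -- Rolle points
    have hrolle : ∀ i : ℕ, ∃ y : ℝ, i + 1 < m + 1 →
        x i < y ∧ y < x (i + 1) ∧ 0 < y ∧ g' y = 0 := by
      intro i
      by_cases hi : i + 1 < m + 1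
      · have hab : x i < x (i + 1) := hxmono i hi
        have hxi : 0 < x i := hxpos i (by omega)
        have hcont : ContinuousOn g (Set.Icc (x i) (x (i + 1))) := by
          intro t ht
          exact ((hderiv t (lt_of_lt_of_le hxi ht.1)).continuousAt).continuousWithinAt
        have heq : g (x i) = g (x (i + 1)) := by
          rw [hgx i (by omega), hgx (i + 1) hi]
        obtain ⟨c, hc, hc0⟩ := exists_hasDerivAt_eq_zero hab hcont heq
          (fun t ht => hderiv t (lt_trans hxi ht.1))
        exact ⟨c, fun _ => ⟨hc.1, hc.2, lt_trans hxi hc.1, hc0⟩⟩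
      · exact ⟨0, fun h => absurd h hi⟩
    choose y hy using hrolle
    have key : ∀ k < m, a (k + 1) * (lam (k + 1) - lam 0) = 0 := by
      refine ih (fun k => a (k + 1) * (lam (k + 1) - lam 0))
        (fun k => lam (k + 1) - lam 0 - 1) y ?_ ?_ ?_ ?_
      · intro i hi j hj h
        have : lam (i + 1) = lam (j + 1) := by linarith
        have := hinj (i + 1) (by omega) (j + 1) (by omega) this
        omega
      · intro i hi; exact (hy i (by omega)).2.2.1
      · intro i hi
        have h1 := hy i (by omega)
        have h2 := hy (i + 1) (by omega)
        have := hxmono i -- maybe unused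
        calc y i < x (i + 1) := h1.2.1
          _ < y (i + 1) := h2.1
      · intro i hi
        have h0 := (hy i (by omega)).2.2.2
        have : g' (y i) = ∑ k ∈ Finset.range m,
            a (k + 1) * (lam (k + 1) - lam 0) * y i ^ (lam (k + 1) - lam 0 - 1) := by
          simp only [hg']
          rw [Finset.sum_range_succ']
          simp [mul_assoc]
        rw [this] at h0
        exact h0
    have ha : ∀ k < m, a (k + 1) = 0 := by
      intro k hk
      have h := key k hk
      rcases mul_eq_zero.1 h with h | h
      · exact h
      · exfalso
        have : lam (k + 1) = lam 0 := by linarith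
        have := hinj (k + 1) (by omega) 0 (by omega) this
        omega
    have ha0 : a 0 = 0 := by
      have h := hroot 0 (by omega)
      rw [Finset.sum_range_succ'] at h
      have hz : ∑ k ∈ Finset.range m, a (k + 1) * x 0 ^ lam (k + 1) = 0 := by
        refine Finset.sum_eq_zero fun k hk => ?_
        rw [ha k (Finset.mem_range.1 hk), zero_mul]
      rw [hz, zero_add] at h
      have hx0 : (0:ℝ) < x 0 ^ lam 0 := Real.rpow_pos_of_pos (hxpos 0 (by omega)) _
      exact (mul_eq_zero.1 h).resolve_right hx0.ne'
    intro k hk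
    cases k with
    | zero => exact ha0
    | succ k => exact ha k (by omega)

lemma descartes_double (n : ℕ) (a lam p : ℕ → ℝ)
    (hinj : ∀ i < 2 * n, ∀ j < 2 * n, lam i = lam j → i = j)
    (hppos : ∀ i < n, 0 < p i)
    (hpmono : ∀ i, i + 1 < n → p i < p (i + 1))
    (hroot : ∀ i < n, ∑ k ∈ Finset.range (2 * n), a k * p i ^ lam k = 0)
    (hroot' : ∀ i < n, ∑ k ∈ Finset.range (2 * n), a k * (lam k * p i ^ (lam k - 1)) = 0) :
    ∀ k < 2 * n, a k = 0 := by
  rcases n with _ | n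
  · intro k hk; omega
  set N := 2 * (n + 1) with hN
  set g : ℝ → ℝ := fun t => ∑ k ∈ Finset.range N, a k * t ^ (lam k - lam 0) with hg
  set g' : ℝ → ℝ := fun t =>
    ∑ k ∈ Finset.range N, a k * ((lam k - lam 0) * t ^ (lam k - lam 0 - 1)) with hg'
  have hderiv : ∀ t : ℝ, 0 < t → HasDerivAt g (g' t) t := by
    intro t ht
    exact HasDerivAt.fun_sum fun k _ =>
      ((Real.hasDerivAt_rpow_const (p := lam k - lam 0) (Or.inl ht.ne'))).const_mul (a k)
  have hgx : ∀ i < n + 1, g (p i) = 0 := by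
    intro i hi
    have hxi := hppos i hi
    have : g (p i) = (∑ k ∈ Finset.range N, a k * p i ^ lam k) / p i ^ lam 0 := by
      rw [Finset.sum_div]
      refine Finset.sum_congr rfl fun k _ => ?_
      rw [Real.rpow_sub hxi, mul_div_assoc]
    rw [this, hroot i hi, zero_div]
  have hg'x : ∀ i < n + 1, g' (p i) = 0 := by
    intro i hi
    have ht : (0:ℝ) < p i := hppos i hi
    have : g' (p i) = p i ^ (-lam 0) * (∑ k ∈ Finset.range N, a k * (lam k * p i ^ (lam k - 1)))
        - lam 0 * p i ^ (-lam 0 - 1) * (∑ k ∈ Finset.range N, a k * p i ^ lam k) := by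
      simp only [hg', Finset.mul_sum, ← Finset.sum_sub_distrib]
      refine Finset.sum_congr rfl fun k _ => ?_
      have e1 : p i ^ (lam k - lam 0 - 1) = p i ^ (lam k - 1) * p i ^ (-lam 0) := by
        rw [← Real.rpow_add ht]; congr 1; ring
      have e2 : p i ^ (lam k - lam 0 - 1) = p i ^ lam k * p i ^ (-lam 0 - 1) := by
        rw [← Real.rpow_add ht]; congr 1; ring
      have : (lam k - lam 0) * p i ^ (lam k - lam 0 - 1)
          = lam k * (p i ^ (lam k - 1) * p i ^ (-lam 0))
            - lam 0 * (p i ^ lam k * p i ^ (-lam 0 - 1)) := by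
        rw [← e1, ← e2]; ring
      linear_combination a k * this
    rw [this, hroot i hi, hroot' i hi]
    ring
  -- Rolle points
  have hrolle : ∀ i : ℕ, ∃ y : ℝ, i + 1 < n + 1 →
      p i < y ∧ y < p (i + 1) ∧ 0 < y ∧ g' y = 0 := by
    intro i
    by_cases hi : i + 1 < n + 1
    · have hab : p i < p (i + 1) := hpmono i hi
      have hxi : 0 < p i := hppos i (by omega)
      have hcont : ContinuousOn g (Set.Icc (p i) (p (i + 1))) := fun t ht =>
        ((hderiv t (lt_of_lt_of_le hxi ht.1)).continuousAt).continuousWithinAt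
      have heq : g (p i) = g (p (i + 1)) := by rw [hgx i (by omega), hgx (i + 1) hi]
      obtain ⟨c, hc, hc0⟩ := exists_hasDerivAt_eq_zero hab hcont heq
        (fun t ht => hderiv t (lt_trans hxi ht.1))
      exact ⟨c, fun _ => ⟨hc.1, hc.2, lt_trans hxi hc.1, hc0⟩⟩
    · exact ⟨0, fun h => absurd h hi⟩
  choose q hq using hrolle
  -- interleaved points
  set z : ℕ → ℝ := fun j => if j % 2 = 0 then p (j / 2) else q (j / 2) with hz
  have hzpos : ∀ j < 2 * n + 1, 0 < z j := by
    intro j hj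
    rcases Nat.even_or_odd j with he | ho
    · have : j % 2 = 0 := Nat.even_iff.1 he
      simp only [hz, this, if_pos rfl]
      exact hppos _ (by omega)
    · have h1 : j % 2 = 1 := Nat.odd_iff.1 ho
      simp only [hz, h1]
      norm_num
      exact ((hq (j / 2)) (by omega)).2.2.1
  have hzval : ∀ j < 2 * n + 1, 0 < z j ∧ g' (z j) = 0 := by
    intro j hj
    rcases Nat.even_or_odd j with he | ho
    · have h0 : j % 2 = 0 := Nat.even_iff.1 he
      simp only [hz, h0, if_pos rfl]
      exact ⟨hppos _ (by omega), hg'x _ (by omega)⟩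
    · have h1 : j % 2 = 1 := Nat.odd_iff.1 ho
      simp only [hz, h1]
      norm_num
      have := hq (j / 2) (by omega)
      exact ⟨this.2.2.1, this.2.2.2⟩
  have hzmono : ∀ j, j + 1 < 2 * n + 1 → z j < z (j + 1) := by
    intro j hj
    rcases Nat.even_or_odd j with he | ho
    · have h0 : j % 2 = 0 := Nat.even_iff.1 he
      have h1 : (j + 1) % 2 = 1 := by omega
      have h2 : (j + 1) / 2 = j / 2 := by omega
      simp only [hz, h0, h1, if_pos rfl, h2]
      norm_num
      exact (hq (j / 2) (by omega)).1
    · have h1 : j % 2 = 1 := Nat.odd_iff.1 ho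
      have h0 : (j + 1) % 2 = 0 := by omega
      have h2 : (j + 1) / 2 = j / 2 + 1 := by omega
      simp only [hz, h1, h0, if_pos rfl, h2]
      norm_num
      exact (hq (j / 2) (by omega)).2.1
  have key : ∀ k < 2 * n + 1, a (k + 1) * (lam (k + 1) - lam 0) = 0 := by
    refine descartes_simple (2 * n + 1) (fun k => a (k + 1) * (lam (k + 1) - lam 0))
      (fun k => lam (k + 1) - lam 0 - 1) z ?_ ?_ ?_ ?_
    · intro i hi j hj h
      have : lam (i + 1) = lam (j + 1) := by linarith
      have := hinj (i + 1) (by omega) (j + 1) (by omega) this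
      omega
    · exact hzpos
    · intro i hi; exact hzmono i hi
    · intro i hi
      have h0 := (hzval i hi).2
      have : g' (z i) = ∑ k ∈ Finset.range (2 * n + 1),
          a (k + 1) * (lam (k + 1) - lam 0) * z i ^ (lam (k + 1) - lam 0 - 1) := by
        simp only [hg', hN, show 2 * (n + 1) = (2 * n + 1) + 1 by ring]
        rw [Finset.sum_range_succ']
        simp [mul_assoc]
      rw [this] at h0
      exact h0
  have ha : ∀ k < 2 * n + 1, a (k + 1) = 0 := by
    intro k hk
    rcases mul_eq_zero.1 (key k hk) with h | h
    · exact h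
    · exfalso
      have : lam (k + 1) = lam 0 := by linarith
      have := hinj (k + 1) (by omega) 0 (by omega) this
      omega
  have ha0 : a 0 = 0 := by
    have h := hroot 0 (by omega)
    rw [hN, show 2 * (n + 1) = (2 * n + 1) + 1 by ring, Finset.sum_range_succ'] at h
    have hzz : ∑ k ∈ Finset.range (2 * n + 1), a (k + 1) * p 0 ^ lam (k + 1) = 0 :=
      Finset.sum_eq_zero fun k hk => by rw [ha k (Finset.mem_range.1 hk), zero_mul]
    rw [hzz, zero_add] at h
    have hx0 : (0:ℝ) < p 0 ^ lam 0 := Real.rpow_pos_of_pos (hppos 0 (by omega)) _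
    exact (mul_eq_zero.1 h).resolve_right hx0.ne'
  intro k hk
  cases k with
  | zero => exact ha0
  | succ k => exact ha k (by omega)

/-- The Loewner matrix `L_r` associated with points `p 0, ..., p (n-1)` and exponent `r`:
its `(i,j)` entry is `(p i ^ r - p j ^ r) / (p i - p j)` for `i ≠ j` and `r * p i ^ (r-1)`
for `i = j` (powers are real powers `Real.rpow`). -/
noncomputable def loewner {n : ℕ} (p : Fin n → ℝ) (r : ℝ) : Matrix (Fin n) (Fin n) ℝ :=
  Matrix.of fun i j => if i = j then r * p i ^ (r - 1) else (p i ^ r - p j ^ r) / (p i - p j)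

/-- If `r > 0` is different from `1, 2, …, n-1`, then the Loewner matrix `L_r`
is nonsingular. -/
theorem loewner_nonsingular {n : ℕ} (p : Fin n → ℝ)
    (hp : ∀ i, 0 < p i) (hmono : StrictMono p)
    (r : ℝ) (hr : 0 < r) (hri : ∀ k : ℕ, 1 ≤ k → k ≤ n - 1 → r ≠ (k : ℝ)) :
    (loewner p r).det ≠ 0 := by
  rcases Nat.eq_zero_or_pos n with rfl | hn
  · simp [Matrix.det_isEmpty]
  intro hdet
  obtain ⟨c, hc0, hLc⟩ := Matrix.exists_mulVec_eq_zero_iff.2 hdet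
  classical
  set Q : Fin n → Polynomial ℝ :=
    fun j => ∏ k ∈ Finset.univ.erase j, (Polynomial.X - Polynomial.C (p k)) with hQ
  set A : Polynomial ℝ := ∑ j, Polynomial.C (c j) * Q j with hA
  set B : Polynomial ℝ := ∑ j, Polynomial.C (c j * p j ^ r) * Q j with hB
  have hQeval : ∀ (j : Fin n) (x : ℝ),
      (Q j).eval x = ∏ k ∈ Finset.univ.erase j, (x - p k) := by
    intro j x; simp [hQ, Polynomial.eval_prod]
  have hQzero : ∀ i j : Fin n, i ≠ j → (Q j).eval (p i) = 0 := by
    intro i j hij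
    rw [hQeval]
    exact Finset.prod_eq_zero (Finset.mem_erase.2 ⟨hij, Finset.mem_univ i⟩) (by ring)
  set D : Fin n → ℝ := fun i => ∏ k ∈ Finset.univ.erase i, (p i - p k) with hD
  have hDne : ∀ i, D i ≠ 0 := by
    intro i
    refine Finset.prod_ne_zero_iff.2 fun k hk => ?_
    exact sub_ne_zero.2 fun h => (Finset.mem_erase.1 hk).1 (hmono.injective h.symm)
  have hQii : ∀ i, (Q i).eval (p i) = D i := fun i => hQeval i (p i)
  have hQder : ∀ i j : Fin n, i ≠ j →
      (Q j).derivative.eval (p i) = ∏ k ∈ (Finset.univ.erase j).erase i, (p i - p k) := by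
    intro i j hij
    have hmem : i ∈ Finset.univ.erase j := Finset.mem_erase.2 ⟨hij, Finset.mem_univ i⟩
    have hfac : Q j = (Polynomial.X - Polynomial.C (p i)) *
        ∏ k ∈ (Finset.univ.erase j).erase i, (Polynomial.X - Polynomial.C (p k)) :=
      (Finset.mul_prod_erase _ _ hmem).symm
    rw [hfac, Polynomial.derivative_mul, Polynomial.derivative_X_sub_C]
    simp [Polynomial.eval_prod]
  have hDfac : ∀ i j : Fin n, i ≠ j →
      D i = (p i - p j) * ∏ k ∈ (Finset.univ.erase j).erase i, (p i - p k) := by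
    intro i j hij
    have hmem : j ∈ Finset.univ.erase i := Finset.mem_erase.2 ⟨hij.symm, Finset.mem_univ j⟩
    have h1 : D i = (p i - p j) * ∏ k ∈ (Finset.univ.erase i).erase j, (p i - p k) :=
      (Finset.mul_prod_erase _ _ hmem).symm
    have hset : (Finset.univ.erase i).erase j = (Finset.univ.erase j).erase i := by
      ext x
      simp only [Finset.mem_erase, Finset.mem_univ, and_true]
      tauto
    rw [h1, hset]
  set F : ℝ → ℝ := fun x => ∑ j, c j * ((x ^ r - p j ^ r) * (Q j).eval x) with hF
  have hFroot : ∀ i, F (p i) = 0 := by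
    intro i
    refine Finset.sum_eq_zero fun j _ => ?_
    by_cases h : j = i
    · subst h; simp
    · rw [hQzero i j (Ne.symm h)]; ring
  set F' : ℝ → ℝ := fun x => ∑ j, c j * ((r * x ^ (r - 1)) * (Q j).eval x
      + (x ^ r - p j ^ r) * (Q j).derivative.eval x) with hF'
  have hFderiv : ∀ x : ℝ, 0 < x → HasDerivAt F (F' x) x := by
    intro x hx
    refine HasDerivAt.fun_sum fun j _ => ?_
    have h1 : HasDerivAt (fun y : ℝ => y ^ r - p j ^ r) (r * x ^ (r - 1)) x :=
      (Real.hasDerivAt_rpow_const (Or.inl hx.ne')).sub_const _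
    exact ((h1.mul ((Q j).hasDerivAt x))).const_mul (c j)
  have hF'zero : ∀ i, F' (p i) = 0 := by
    intro i
    have hm : (loewner p r).mulVec c i = ∑ j, loewner p r i j * c j := rfl
    have hLci : ∑ j, loewner p r i j * c j = 0 := by
      rw [← hm, hLc]; rfl
    have hstep : F' (p i) = D i * ∑ j, loewner p r i j * c j := by
      rw [Finset.mul_sum]
      refine Finset.sum_congr rfl fun j _ => ?_
      by_cases h : j = i
      · subst h
        rw [hQii]
        simp only [loewner, Matrix.of_apply, eq_self_iff_true, if_true, sub_self, zero_mul,
          add_zero]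
        ring
      · have hij : i ≠ j := Ne.symm h
        rw [hQzero i j hij, hQder i j hij, hDfac i j hij]
        simp only [loewner, Matrix.of_apply, if_neg hij]
        have hpij : p i - p j ≠ 0 := sub_ne_zero.2 fun hh => hij (hmono.injective hh)
        field_simp
        ring
    rw [hstep, hLci, mul_zero]
  -- exponents and coefficients
  set lam : ℕ → ℝ := fun k => if k < n then (k : ℝ) else r + ((k - n : ℕ) : ℝ) with hlam
  set a : ℕ → ℝ := fun k => if k < n then -(B.coeff k) else A.coeff (k - n) with ha
  have hQdeg : ∀ j, (Q j).natDegree ≤ n - 1 := by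
    intro j
    refine le_trans (Polynomial.natDegree_prod_le _ _) (le_of_eq ?_)
    calc ∑ k ∈ Finset.univ.erase j, (Polynomial.X - Polynomial.C (p k)).natDegree
        = ∑ _k ∈ Finset.univ.erase j, 1 :=
          Finset.sum_congr rfl fun k _ => Polynomial.natDegree_X_sub_C _
      _ = n - 1 := by
          rw [Finset.sum_const, smul_eq_mul, mul_one,
            Finset.card_erase_of_mem (Finset.mem_univ j), Finset.card_univ, Fintype.card_fin]
  have hAdeg : A.natDegree < n :=
    lt_of_le_of_lt (Polynomial.natDegree_sum_le_of_forall_le _ _ fun j _ =>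
      le_trans (Polynomial.natDegree_C_mul_le _ _) (hQdeg j)) (by omega)
  have hBdeg : B.natDegree < n :=
    lt_of_le_of_lt (Polynomial.natDegree_sum_le_of_forall_le _ _ fun j _ =>
      le_trans (Polynomial.natDegree_C_mul_le _ _) (hQdeg j)) (by omega)
  have hGeq : ∀ x : ℝ, 0 < x →
      ∑ k ∈ Finset.range (2 * n), a k * x ^ lam k = x ^ r * A.eval x - B.eval x := by
    intro x hx
    rw [show 2 * n = n + n by ring, Finset.sum_range_add]
    have h1 : ∑ k ∈ Finset.range n, a k * x ^ lam k = -B.eval x := by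
      rw [Polynomial.eval_eq_sum_range' hBdeg x, ← neg_one_mul, Finset.mul_sum]
      refine Finset.sum_congr rfl fun k hk => ?_
      have hkn : k < n := Finset.mem_range.1 hk
      simp only [ha, hlam, if_pos hkn]
      rw [Real.rpow_natCast]
      ring
    have h2 : ∑ i ∈ Finset.range n, a (n + i) * x ^ lam (n + i) = x ^ r * A.eval x := by
      rw [Polynomial.eval_eq_sum_range' hAdeg x, Finset.mul_sum]
      refine Finset.sum_congr rfl fun i hi => ?_
      have hni : ¬ (n + i < n) := by omega
      simp only [ha, hlam, if_neg hni]
      rw [show n + i - n = i by omega, Real.rpow_add hx, Real.rpow_natCast]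
      ring
    rw [h1, h2]; ring
  have hFrep : ∀ x : ℝ, F x = x ^ r * A.eval x - B.eval x := by
    intro x
    simp only [hF, hA, hB, Polynomial.eval_finset_sum, Polynomial.eval_mul, Polynomial.eval_C,
      Finset.mul_sum, ← Finset.sum_sub_distrib]
    exact Finset.sum_congr rfl fun j _ => by ring
  have hFG : ∀ x : ℝ, 0 < x → F x = ∑ k ∈ Finset.range (2 * n), a k * x ^ lam k := by
    intro x hx; rw [hFrep, hGeq x hx]
  have hGderivAt : ∀ i : Fin n,
      HasDerivAt F (∑ k ∈ Finset.range (2 * n), a k * (lam k * p i ^ (lam k - 1))) (p i) := by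
    intro i
    have hG : HasDerivAt (fun x => ∑ k ∈ Finset.range (2 * n), a k * x ^ lam k)
        (∑ k ∈ Finset.range (2 * n), a k * (lam k * p i ^ (lam k - 1))) (p i) :=
      HasDerivAt.fun_sum fun k _ =>
        ((Real.hasDerivAt_rpow_const (p := lam k) (Or.inl (hp i).ne'))).const_mul (a k)
    refine hG.congr_of_eventuallyEq ?_
    exact Filter.eventuallyEq_of_mem (Ioi_mem_nhds (hp i)) fun x hx => hFG x hx
  have hG'zero : ∀ i : Fin n,
      ∑ k ∈ Finset.range (2 * n), a k * (lam k * p i ^ (lam k - 1)) = 0 := by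
    intro i
    have hd1 : HasDerivAt F 0 (p i) := by
      have := hFderiv (p i) (hp i)
      rwa [hF'zero i] at this
    exact (hGderivAt i).unique hd1
  have hlaminj : ∀ i < 2 * n, ∀ j < 2 * n, lam i = lam j → i = j := by
    intro i hi j hj h
    simp only [hlam] at h
    rcases lt_or_ge i n with h1 | h1 <;> rcases lt_or_ge j n with h2 | h2
    · rw [if_pos h1, if_pos h2] at h; exact_mod_cast h
    · exfalso
      rw [if_pos h1, if_neg (by omega)] at h
      have hlt : j - n < i := by
        by_contra hcon
        push_neg at hcon
        have : (i : ℝ) ≤ ((j - n : ℕ) : ℝ) := by exact_mod_cast hcon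
        linarith
      have hrv : r = ((i - (j - n) : ℕ) : ℝ) := by
        rw [Nat.cast_sub hlt.le]; linarith
      exact hri (i - (j - n)) (by omega) (by omega) hrv
    · exfalso
      rw [if_neg (by omega), if_pos h2] at h
      have hlt : i - n < j := by
        by_contra hcon
        push_neg at hcon
        have : (j : ℝ) ≤ ((i - n : ℕ) : ℝ) := by exact_mod_cast hcon
        linarith
      have hrv : r = ((j - (i - n) : ℕ) : ℝ) := by
        rw [Nat.cast_sub hlt.le]; linarith
      exact hri (j - (i - n)) (by omega) (by omega) hrv
    · rw [if_neg (by omega), if_neg (by omega)] at h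
      have : ((i - n : ℕ) : ℝ) = ((j - n : ℕ) : ℝ) := by linarith
      have : i - n = j - n := by exact_mod_cast this
      omega
  set pp : ℕ → ℝ := fun i => if h : i < n then p ⟨i, h⟩ else 1 with hpp
  have hall : ∀ k < 2 * n, a k = 0 := by
    refine descartes_double n a lam pp hlaminj ?_ ?_ ?_ ?_
    · intro i hi; simp only [hpp, dif_pos hi]; exact hp _
    · intro i hi
      simp only [hpp, dif_pos (show i < n by omega), dif_pos (show i + 1 < n by omega)]
      exact hmono (by simp [Fin.mk_lt_mk])
    · intro i hi
      simp only [hpp, dif_pos hi]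
      rw [← hFG _ (hp _)]
      exact hFroot _
    · intro i hi
      simp only [hpp, dif_pos hi]
      exact hG'zero _
  have hAzero : A = 0 := by
    ext k
    rcases lt_or_ge k n with hk | hk
    · have hcoef := hall (n + k) (by omega)
      simp only [ha, if_neg (show ¬ n + k < n by omega)] at hcoef
      rw [show n + k - n = k by omega] at hcoef
      simpa using hcoef
    · simp [Polynomial.coeff_eq_zero_of_natDegree_lt (lt_of_lt_of_le hAdeg hk)]
  have hci : ∀ i, c i = 0 := by
    intro i
    have h0 : A.eval (p i) = 0 := by rw [hAzero]; simp
    have hrep : A.eval (p i) = c i * D i := by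
      simp only [hA, Polynomial.eval_finset_sum, Polynomial.eval_mul, Polynomial.eval_C]
      rw [Finset.sum_eq_single i]
      · rw [hQii]
      · intro j _ hji; rw [hQzero i j (Ne.symm hji), mul_zero]
      · intro hmem; exact absurd (Finset.mem_univ i) hmem
    rw [hrep] at h0
    exact (mul_eq_zero.1 h0).resolve_right (hDne i)
  exact hc0 (funext hci)
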